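/- Fix a positive integer n, an integer M, and an integer j, and let A be the set of 2n products { x(j+i)·y(M-j-i) : 0 ≤ i ≤ 2n-1 } inside the free ℤ-module with basis { x(m)·y(m') : m + m' = M }. Consider the formal recursion coming from expanding (z₁ - z₂)^{2n} Σ_{m+m'=M} x(m) y(m') z₁^{-m-1} z₂^{-m'-1} = 0: then each element of A can be written as a ℤ-linear combination of the basis elements { x(m)·y(m') : m + m' = M } \ A. Concretely: the (2n+1) × (2n) matrix with rows indexed by i ∈ {0,...,2n} and columns by the elements of A, whose entries are the binomial coefficients (-1)^i C(2n, i) appearing as coefficients of elements of A in the relations Σ_{i=0}^{2n} (-1)^i C(2n,i) x(j' + i) y(M - j' - i) = 0 for 2n consecutive values of j', has the property that the square submatrix of coefficients of the A-columns is invertible over ℚ. -/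
import Mathlib

open Polynomial Finset

/-- The coefficient of the product `x(m)·y(M-m)` in the relation
`Σ_{i=0}^{2n} (-1)^i C(2n,i) x(j'+i) y(M-j'-i) = 0` (coming from expanding
`(z₁-z₂)^{2n} x(z₁) y(z₂) = 0`), namely `(-1)^{m-j'} C(2n, m-j')` when
`0 ≤ m - j' ≤ 2n` and `0` otherwise. -/
noncomputable def relCoeff (n : ℕ) (j' m : ℤ) : ℚ :=
  if 0 ≤ m - j' ∧ m - j' ≤ 2 * n then
    (-1) ^ (m - j').toNat * (Nat.choose (2 * n) (m - j').toNat : ℚ)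
  else 0

lemma coeff_one_sub_X_pow (N k : ℕ) :
    ((1 - X : ℚ[X]) ^ N).coeff k = (-1) ^ k * (N.choose k : ℚ) := by
  have h1 : (1 - X : ℚ[X]) = -(X + C (-1)) := by
    simp [C_neg]
    ring
  rw [h1, neg_pow]
  have h2 : ((-1 : ℚ[X]) ^ N) = C ((-1 : ℚ) ^ N) := by
    rw [map_pow, C_neg, C_1]
  rw [h2, coeff_C_mul, coeff_X_add_C_pow]
  by_cases hk : k ≤ N
  · have : N + (N - k) = k + 2 * (N - k) := by omega
    rw [← mul_assoc, ← pow_add, this, pow_add, pow_mul]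
    norm_num
  · rw [Nat.choose_eq_zero_of_lt (by omega)]
    simp

lemma relCoeff_eq (n : ℕ) (j : ℤ) (s i : ℕ) :
    relCoeff n (j - s) (j + i) = ((1 - X : ℚ[X]) ^ (2 * n)).coeff (i + s) := by
  have h1 : (j + i) - (j - s) = ((i + s : ℕ) : ℤ) := by push_cast; ring
  rw [relCoeff, h1, coeff_one_sub_X_pow]
  simp only [Int.toNat_natCast]
  by_cases h : ((i + s : ℕ) : ℤ) ≤ 2 * n
  · rw [if_pos ⟨by positivity, h⟩]
  · rw [if_neg (fun hc => h hc.2), Nat.choose_eq_zero_of_lt (by omega), Nat.cast_zero, mul_zero]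

/-- Lemma 1.3, linear-algebra core: consider the set
`A = {x(j+i)·y(M-j-i) : 0 ≤ i ≤ 2n-1}` of `2n` products and the relations
`Σ_{i=0}^{2n} (-1)^i C(2n,i) x(j'+i) y(M-j'-i) = 0` for the `2n` consecutive values
`j' = j, j-1, …, j-(2n-1)`.  The square matrix of the coefficients of the elements of
`A` in these relations is invertible over `ℚ`; hence each element of `A` can be
expressed as a `ℚ`-linear (in fact `ℤ`-linear) combination of products
`x(m)·y(m')` with `m+m' = M` outside `A`. -/
theorem statement15 (n : ℕ) (hn : 0 < n) (M j : ℤ) :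
    (Matrix.of fun s i : Fin (2 * n) =>
        relCoeff n (j - (s : ℕ)) (j + (i : ℕ))).det ≠ 0 := by
  intro hdet
  obtain ⟨v, hv, hmul⟩ := Matrix.exists_vecMul_eq_zero_iff.mpr hdet
  set P : ℚ[X] := (1 - X) ^ (2 * n) with hP
  have h1X : (1 - X : ℚ[X]) = -(X - C 1) := by rw [C_1]; ring
  have hPXC : P = (X - C (1 : ℚ)) ^ (2 * n) := by
    rw [hP, h1X, Even.neg_pow (even_two_mul n)]
  have hPd : P.natDegree = 2 * n := by
    rw [hPXC, natDegree_pow, natDegree_X_sub_C, mul_one]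
  have hPne : P ≠ 0 := by
    rw [hPXC]
    exact pow_ne_zero _ (X_sub_C_ne_zero 1)
  set Q : ℚ[X] := ∑ s : Fin (2 * n), C (v s) * X ^ (2 * n - 1 - (s : ℕ)) with hQ
  have hQd : Q.natDegree ≤ 2 * n - 1 := by
    refine natDegree_sum_le_of_forall_le _ _ fun s _ => ?_
    refine (natDegree_C_mul_le _ _).trans ?_
    rw [natDegree_X_pow]
    omega
  set S : ℚ[X] := Q * P with hS
  have hdvd : (X - C (1 : ℚ)) ^ (2 * n) ∣ S := ⟨Q, by rw [hS, hPXC, mul_comm]⟩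
  have hSd : S.natDegree ≤ 4 * n - 1 := by
    refine natDegree_mul_le.trans ?_
    rw [hPd]; omega
  -- the key vanishing of coefficients
  have hvan : ∀ i : Fin (2 * n), S.coeff (2 * n - 1 + (i : ℕ)) = 0 := by
    intro i
    have hrow := congrFun hmul i
    simp only [Matrix.vecMul, dotProduct, Pi.zero_apply, Matrix.of_apply] at hrow
    have hsum : S.coeff (2 * n - 1 + (i : ℕ)) = ∑ s : Fin (2 * n), v s * P.coeff ((i : ℕ) + (s : ℕ)) := by
      rw [hS, hQ, Finset.sum_mul, finset_sum_coeff]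
      refine Finset.sum_congr rfl fun s _ => ?_
      rw [mul_right_comm, coeff_mul_X_pow', if_pos (by omega), coeff_C_mul]
      congr 2
      omega
    rw [hsum, ← hrow]
    refine Finset.sum_congr rfl fun s _ => ?_
    rw [relCoeff_eq n j (s : ℕ) (i : ℕ), ← hP]
  set c : ℚ := S.coeff (4 * n - 1) with hc
  set L : ℚ[X] := ∑ k ∈ Finset.range (2 * n - 1), C (S.coeff k) * X ^ k with hLdef
  have hL : ∀ k : ℕ, L.coeff k = if k < 2 * n - 1 then S.coeff k else 0 := by
    intro k
    rw [hLdef, finset_sum_coeff]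
    simp only [coeff_C_mul, coeff_X_pow, mul_ite, mul_one, mul_zero]
    rw [Finset.sum_ite_eq (Finset.range (2 * n - 1)) k (fun m => S.coeff m)]
    simp [Finset.mem_range]
  have hLd : L.natDegree ≤ 2 * n - 2 := by
    refine natDegree_sum_le_of_forall_le _ _ fun k hk => ?_
    refine (natDegree_C_mul_le _ _).trans ?_
    rw [natDegree_X_pow]
    simp only [Finset.mem_range] at hk
    omega
  have hSeq : S = L + C c * X ^ (4 * n - 1) := by
    ext k
    rw [coeff_add, coeff_C_mul, coeff_X_pow, hL]
    rcases lt_trichotomy k (2 * n - 1) with h | h | h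
    · rw [if_pos h, if_neg (by omega)]
      ring
    · subst h
      rw [if_neg (by omega), if_neg (by omega)]
      have := hvan ⟨0, by omega⟩
      simpa using this
    · rw [if_neg (by omega)]
      by_cases h4 : k = 4 * n - 1
      · subst h4
        rw [if_pos rfl, hc]
        ring
      · rw [if_neg h4]
        by_cases h5 : k ≤ 4 * n - 2
        · have hv2 := hvan ⟨k - (2 * n - 1), by omega⟩
          have : 2 * n - 1 + (k - (2 * n - 1)) = k := by omega
          rw [this] at hv2
          rw [hv2]
          ring
        · rw [coeff_eq_zero_of_natDegree_lt (hSd.trans_lt (by omega))]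
          ring
  have hder : (derivative^[2 * n - 1] S).eval 1 = 0 := by
    have h2 := Polynomial.pow_sub_dvd_iterate_derivative_of_pow_dvd (2 * n - 1) hdvd
    have h3 : 2 * n - (2 * n - 1) = 1 := by omega
    rw [h3, pow_one] at h2
    obtain ⟨r, hr⟩ := h2
    rw [hr]
    simp
  have hderL : derivative^[2 * n - 1] L = 0 :=
    iterate_derivative_eq_zero (lt_of_le_of_lt hLd (by omega))
  have hczero : c = 0 := by
    have e1 : derivative^[2 * n - 1] S
        = C c * (((4 * n - 1).descFactorial (2 * n - 1) : ℚ[X]) * X ^ (4 * n - 1 - (2 * n - 1))) := by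
      rw [hSeq, iterate_map_add derivative _ _, hderL, zero_add, iterate_derivative_C_mul,
        iterate_derivative_X_pow_eq_natCast_mul]
    rw [e1] at hder
    simp only [eval_mul, eval_C, eval_natCast, eval_pow, eval_X, one_pow, mul_one] at hder
    have hD : ((4 * n - 1).descFactorial (2 * n - 1) : ℚ) ≠ 0 := by
      rw [Nat.cast_ne_zero]
      rw [Ne, Nat.descFactorial_eq_zero_iff_lt]
      omega
    exact (mul_eq_zero.mp hder).resolve_right hD
  have hSzero : S = 0 := by
    by_contra h0
    have hle := Polynomial.natDegree_le_of_dvd hdvd h0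
    rw [natDegree_pow, natDegree_X_sub_C, mul_one] at hle
    have : S.natDegree ≤ 2 * n - 2 := by
      rw [hSeq, hczero]
      simpa using hLd
    omega
  have hQzero : Q = 0 := by
    rcases mul_eq_zero.mp (hS ▸ hSzero) with h | h
    · exact h
    · exact absurd h hPne
  apply hv
  funext s
  have hQc : Q.coeff (2 * n - 1 - (s : ℕ)) = v s := by
    rw [hQ, finset_sum_coeff]
    simp only [coeff_C_mul, coeff_X_pow, mul_ite, mul_one, mul_zero]
    rw [Finset.sum_eq_single s]
    · simp
    · intro t _ hts
      rw [if_neg]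
      intro he
      exact hts (Fin.ext (by omega))
    · simp
  rw [← hQc, hQzero, coeff_zero]
  rfl
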